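/- For every real number x with 0 ≤ x ≤ 1, the inequalities arcsin x ≤ (π/(π − 2))·x / (2/(π − 2) + √(1 − x²)) ≤ πx/(2 + √(1 − x²)) hold. -/

import Mathlib

open Real Set

lemma nonneg_of_deriv (f f' : ℝ → ℝ) (hd : ∀ s, HasDerivAt f (f' s) s) (h0 : f 0 = 0)
    (hder : ∀ s, 0 ≤ s → 0 ≤ f' s) (t : ℝ) (ht : 0 ≤ t) : 0 ≤ f t := by
  have mono : MonotoneOn f (Set.Ici 0) := by
    apply monotoneOn_of_deriv_nonneg (convex_Ici 0)
      (fun s _ => (hd s).continuousAt.continuousWithinAt)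
      (fun s _ => (hd s).differentiableAt.differentiableWithinAt)
    intro s hs
    rw [(hd s).deriv]
    exact hder s (le_of_lt (by simpa [interior_Ici] using hs))
  have := mono Set.self_mem_Ici (Set.mem_Ici.2 ht) ht
  rwa [h0] at this

lemma sin_ge_cubic (t : ℝ) (ht : 0 ≤ t) : t - t^3/6 ≤ Real.sin t := by
  have h := nonneg_of_deriv (fun u => Real.sin u - (u - u^3/6))
    (fun u => Real.cos u - (1 - u^2/2))
    (fun s => by
      have h2 : HasDerivAt (fun u : ℝ => u - u^3/6) (1 - s^2/2) s := by
        have h := (hasDerivAt_id s).sub ((hasDerivAt_pow 3 s).div_const 6)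
        exact h.congr_deriv (by push_cast; ring)
      exact (Real.hasDerivAt_sin s).sub h2)
    (by simp)
    (fun s _ => by simpa using Real.one_sub_sq_div_two_le_cos (x := s)) t ht
  simpa using h

lemma cos_le_quartic (t : ℝ) (ht : 0 ≤ t) : Real.cos t ≤ 1 - t^2/2 + t^4/24 := by
  have h := nonneg_of_deriv (fun u => 1 - u^2/2 + u^4/24 - Real.cos u)
    (fun u => -(u - u^3/6) + Real.sin u)
    (fun s => by
      have h2 : HasDerivAt (fun u : ℝ => 1 - u^2/2 + u^4/24) (-(s - s^3/6)) s := by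
        have h := (((hasDerivAt_const s (1:ℝ)).sub ((hasDerivAt_pow 2 s).div_const 2)).add
          ((hasDerivAt_pow 4 s).div_const 24))
        exact h.congr_deriv (by push_cast; ring)
      have := h2.sub (Real.hasDerivAt_cos s)
      exact this.congr_deriv (by ring))
    (by simp)
    (fun s hs => by have := sin_ge_cubic s hs; linarith) t ht
  simp at h; linarith

lemma sin_le_quintic (t : ℝ) (ht : 0 ≤ t) : Real.sin t ≤ t - t^3/6 + t^5/120 := by
  have h := nonneg_of_deriv (fun u => u - u^3/6 + u^5/120 - Real.sin u)
    (fun u => (1 - u^2/2 + u^4/24) - Real.cos u)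
    (fun s => by
      have h2 : HasDerivAt (fun u : ℝ => u - u^3/6 + u^5/120) (1 - s^2/2 + s^4/24) s := by
        have h := (((hasDerivAt_id s).sub ((hasDerivAt_pow 3 s).div_const 6)).add
          ((hasDerivAt_pow 5 s).div_const 120))
        exact h.congr_deriv (by push_cast; ring)
      exact h2.sub (Real.hasDerivAt_sin s))
    (by simp)
    (fun s hs => by simpa using cos_le_quartic s hs) t ht
  simpa using h

lemma cos_ge_sextic (t : ℝ) (ht : 0 ≤ t) : 1 - t^2/2 + t^4/24 - t^6/720 ≤ Real.cos t := by
  have h := nonneg_of_deriv (fun u => Real.cos u - (1 - u^2/2 + u^4/24 - u^6/720))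
    (fun u => (u - u^3/6 + u^5/120) - Real.sin u)
    (fun s => by
      have h2 : HasDerivAt (fun u : ℝ => 1 - u^2/2 + u^4/24 - u^6/720)
          (-(s - s^3/6 + s^5/120)) s := by
        have h := ((((hasDerivAt_const s (1:ℝ)).sub ((hasDerivAt_pow 2 s).div_const 2)).add
          ((hasDerivAt_pow 4 s).div_const 24)).sub ((hasDerivAt_pow 6 s).div_const 720))
        exact h.congr_deriv (by push_cast; ring)
      have := (Real.hasDerivAt_cos s).sub h2
      exact this.congr_deriv (by ring))
    (by simp)
    (fun s hs => by simpa using sin_le_quintic s hs) t ht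
  simpa using h

lemma sin_ge_septic (t : ℝ) (ht : 0 ≤ t) : t - t^3/6 + t^5/120 - t^7/5040 ≤ Real.sin t := by
  have h := nonneg_of_deriv (fun u => Real.sin u - (u - u^3/6 + u^5/120 - u^7/5040))
    (fun u => Real.cos u - (1 - u^2/2 + u^4/24 - u^6/720))
    (fun s => by
      have h2 : HasDerivAt (fun u : ℝ => u - u^3/6 + u^5/120 - u^7/5040)
          (1 - s^2/2 + s^4/24 - s^6/720) s := by
        have h := ((((hasDerivAt_id s).sub ((hasDerivAt_pow 3 s).div_const 6)).add
          ((hasDerivAt_pow 5 s).div_const 120)).sub ((hasDerivAt_pow 7 s).div_const 5040))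
        exact h.congr_deriv (by push_cast; ring)
      exact (Real.hasDerivAt_sin s).sub h2)
    (by simp)
    (fun s hs => by simpa using cos_ge_sextic s hs) t ht
  simpa using h

lemma key_ineq (θ : ℝ) (h0 : 0 ≤ θ) (h2 : θ ≤ π/2) :
    θ * (2 + (π - 2) * Real.cos θ) ≤ π * Real.sin θ := by
  have hπ1 := Real.pi_gt_d6
  have hπ2 := Real.pi_lt_d6
  rcases le_or_gt θ 1.2 with hc | hc
  · have hs := sin_ge_septic θ h0
    have hcos := cos_le_quartic θ h0
    nlinarith [pow_nonneg h0 3, pow_nonneg h0 5, pow_nonneg h0 7, sq_nonneg θ,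
      mul_nonneg (pow_nonneg h0 3) (sub_nonneg.2 (by nlinarith : θ^2 ≤ 1.44)),
      mul_nonneg (pow_nonneg h0 5) (sub_nonneg.2 (by nlinarith : θ^2 ≤ 1.44)),
      mul_nonneg h0 (sub_nonneg.2 hcos)]
  · have hgen : ∀ s : ℝ, 0 ≤ s → s ≤ 0.38 →
        (π/2 - s) * (2 + (π - 2) * Real.sin s) ≤ π * Real.cos s := by
      intro s hs0 hs1
      have h1 : Real.sin s ≤ s := Real.sin_le hs0
      have hsinpos : 0 ≤ Real.sin s := Real.sin_nonneg_of_nonneg_of_le_pi hs0 (by nlinarith)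
      have hcos : 1 - s^2/2 ≤ Real.cos s := Real.one_sub_sq_div_two_le_cos
      have hps : (0:ℝ) ≤ π/2 - s := by linarith
      have hbr : 0 ≤ 2 - π*(π-2)/2 + s*(π/2-2) := by nlinarith
      nlinarith [mul_nonneg hs0 hbr,
        mul_nonneg (mul_nonneg hps (by linarith : (0:ℝ) ≤ π - 2)) (sub_nonneg.2 h1)]
    have := hgen (π/2 - θ) (by linarith) (by linarith)
    rw [Real.sin_pi_div_two_sub, Real.cos_pi_div_two_sub] at this
    have h' : π/2 - (π/2 - θ) = θ := by ring
    rw [h'] at this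
    exact this

theorem malesevic_upper_bounds (x : ℝ) (hx : 0 ≤ x) (hx' : x ≤ 1) :
    Real.arcsin x ≤
      (Real.pi / (Real.pi - 2)) * x / (2 / (Real.pi - 2) + Real.sqrt (1 - x ^ 2)) ∧
    (Real.pi / (Real.pi - 2)) * x / (2 / (Real.pi - 2) + Real.sqrt (1 - x ^ 2)) ≤
      Real.pi * x / (2 + Real.sqrt (1 - x ^ 2)) := by
  have hπ : (0:ℝ) < π - 2 := by linarith [Real.pi_gt_three]
  have hπ3 : (3:ℝ) < π := Real.pi_gt_three
  set c := Real.sqrt (1 - x ^ 2) with hc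
  have hc0 : 0 ≤ c := Real.sqrt_nonneg _
  have hD : 0 < 2 / (π - 2) + c := by positivity
  have hD2 : 0 < 2 + c := by linarith
  have hθ0 : 0 ≤ Real.arcsin x := Real.arcsin_nonneg.2 hx
  have hθ2 : Real.arcsin x ≤ π / 2 := Real.arcsin_le_pi_div_two x
  have hsin : Real.sin (Real.arcsin x) = x := Real.sin_arcsin (by linarith) hx'
  have hcos : Real.cos (Real.arcsin x) = c := Real.cos_arcsin x
  have key := key_ineq (Real.arcsin x) hθ0 hθ2
  rw [hsin, hcos] at key
  constructor
  · rw [le_div_iff₀ hD, div_mul_eq_mul_div, le_div_iff₀ hπ]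
    have hDe : (2 / (π - 2) + c) * (π - 2) = 2 + (π - 2) * c := by
      field_simp
    calc Real.arcsin x * (2 / (π - 2) + c) * (π - 2)
        = Real.arcsin x * (2 + (π - 2) * c) := by rw [mul_assoc, hDe]
      _ ≤ π * x := key
  · rw [div_le_div_iff₀ hD hD2, div_mul_eq_mul_div, div_mul_eq_mul_div, div_le_iff₀ hπ]
    have hDe : (2 / (π - 2) + c) * (π - 2) = 2 + (π - 2) * c := by field_simp
    rw [mul_assoc (π * x), hDe]
    nlinarith [mul_nonneg (mul_nonneg (le_of_lt (by linarith : (0:ℝ) < π)) hx) hc0]
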